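/- Let X be a real normed space, Y a real Banach space, θ ≥ 0 and p < 1. Suppose f : X → Y satisfies ‖D_f(x,y)‖ ≤ θ(‖x‖^p + ‖y‖^p) for all x, y in X and f(0) = 0. Then there exist a unique quartic function Q : X → Y and a unique additive function A : X → Y such that ‖f(x) - Q(x) - A(x)‖ ≤ (θ/48) ‖x‖^p (16/(16 - 2^p) + 96/(1 - 2^{p-1})) for all x in X. -/

import Mathlib

open Filter Topology

/-- The quartic functional equation:
`Q(2x+y) + Q(2x-y) = 4(Q(x+y) + Q(x-y)) + 24 Q(x) - 6 Q(y)`. -/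
def IsQuartic {X Y : Type*} [AddCommGroup X] [Module ℝ X] [AddCommGroup Y] [Module ℝ Y]
    (f : X → Y) : Prop :=
  ∀ x y : X,
    f ((2 : ℝ) • x + y) + f ((2 : ℝ) • x - y) =
      (4 : ℝ) • (f (x + y) + f (x - y)) + (24 : ℝ) • f x - (6 : ℝ) • f y

/-- The difference operator
`D_f(x,y) = 7[f(2x+y) + f(2x-y)] - 28[f(x+y) + f(x-y)] + 3[f(2y) - 2f(y)] - 14[f(2x) - 4f(x)]`. -/
def Dmap {X Y : Type*} [AddCommGroup X] [Module ℝ X] [AddCommGroup Y] [Module ℝ Y]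
    (f : X → Y) (x y : X) : Y :=
  (7 : ℝ) • (f ((2 : ℝ) • x + y) + f ((2 : ℝ) • x - y))
    - (28 : ℝ) • (f (x + y) + f (x - y))
    + (3 : ℝ) • (f ((2 : ℝ) • y) - (2 : ℝ) • f y)
    - (14 : ℝ) • (f ((2 : ℝ) • x) - (4 : ℝ) • f x)

section Helpers

variable {X Y : Type*} [NormedAddCommGroup X] [NormedSpace ℝ X]
  [NormedAddCommGroup Y] [NormedSpace ℝ Y]

lemma rpow_zero_le (p t : ℝ) (ht : 0 ≤ t) : (0:ℝ)^p ≤ t^p := by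
  rcases eq_or_ne p 0 with h | h
  · simp [h]
  · rw [Real.zero_rpow h]; exact Real.rpow_nonneg ht p

lemma norm_pow_smul (p : ℝ) (x : X) (n : ℕ) :
    ‖((2:ℝ)^n) • x‖ ^ p = ((2:ℝ)^p)^n * ‖x‖^p := by
  rw [norm_smul, Real.norm_eq_abs, abs_of_nonneg (by positivity),
    Real.mul_rpow (by positivity) (norm_nonneg x), ← Real.rpow_natCast (2:ℝ) n,
    ← Real.rpow_mul (by norm_num), mul_comm (n:ℝ) p, Real.rpow_mul (by norm_num),
    Real.rpow_natCast]

lemma iter_smul (g : X → Y) (μ : ℝ) (hg : ∀ x, g ((2:ℝ)•x) = μ • g x) :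
    ∀ (n : ℕ) (x : X), g (((2:ℝ)^n)•x) = (μ^n) • g x := by
  intro n x
  induction n with
  | zero => simp
  | succ n ih => rw [pow_succ', mul_smul, hg, ih, pow_succ', mul_smul]

lemma quartic_of (Q : X → Y) (h2 : ∀ x, Q ((2:ℝ)•x) = (16:ℝ)•Q x)
    (hD : ∀ x y, Dmap Q x y = 0) :
    ∀ x y : X, Q ((2:ℝ)•x + y) + Q ((2:ℝ)•x - y)
      = (4:ℝ) • (Q (x+y) + Q (x-y)) + (24:ℝ) • Q x - (6:ℝ) • Q y := by
  intro x y
  have h := hD x y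
  simp only [Dmap] at h
  rw [h2 x, h2 y] at h
  linear_combination (norm := module) (7⁻¹:ℝ) • h

lemma additive_of (A : X → Y) (h2 : ∀ x, A ((2:ℝ)•x) = (2:ℝ)•A x)
    (hE : ∀ x y, A ((2:ℝ)•x + y) + A ((2:ℝ)•x - y)
      = (4:ℝ)•A (x+y) + (4:ℝ)•A (x-y) - (4:ℝ)•A x) :
    ∀ x y : X, A (x+y) = A x + A y := by
  set S : X → X → Y := fun x y => A (x+y) + A (x-y) - (2:ℝ)•A x with hS
  have hS4 : ∀ x y, S ((2:ℝ)•x) y = (4:ℝ)•S x y := by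
    intro x y
    simp only [hS]
    rw [hE x y, h2 x]
    module
  have hS2 : ∀ x y, S ((2:ℝ)•x) ((2:ℝ)•y) = (2:ℝ)•S x y := by
    intro x y
    simp only [hS]
    rw [show (2:ℝ)•x + (2:ℝ)•y = (2:ℝ)•(x+y) from by module,
      show (2:ℝ)•x - (2:ℝ)•y = (2:ℝ)•(x-y) from by module, h2, h2, h2]
    module
  have hhalf : ∀ x y, S x ((2:ℝ)•y) = (2:ℝ)⁻¹ • S x y := by
    intro x y
    have hx : (2:ℝ)•((2:ℝ)⁻¹•x) = x := by rw [smul_smul]; norm_num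
    have ha := hS2 ((2:ℝ)⁻¹•x) y; rw [hx] at ha
    have hb := hS4 ((2:ℝ)⁻¹•x) y; rw [hx] at hb
    rw [ha, hb]
    module
  have R1b : ∀ x y, S (x+y) y + S (x-y) y = (-(3/2) : ℝ)•S x y := by
    intro x y
    have e : S (x+y) y + S (x-y) y = S x ((2:ℝ)•y) - (2:ℝ)•S x y := by
      simp only [hS]
      rw [show x+y+y = x + (2:ℝ)•y from by module, show x+y-y = x from by module,
        show x-y+y = x from by module, show x-y-y = x - (2:ℝ)•y from by module]
      module
    rw [e, hhalf]
    module
  have key : ∀ x y, S x y = 0 := by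
    intro x y
    have hA1 := R1b (x+y) y
    rw [show x+y+y = x+(2:ℝ)•y from by module, show x+y-y = x from by module] at hA1
    have hA2' := R1b (x-y) y
    rw [show x-y+y = x from by module, show x-y-y = x-(2:ℝ)•y from by module] at hA2'
    have hB := R1b x ((2:ℝ)•y)
    rw [hhalf, hhalf, hhalf] at hB
    have hC := R1b x y
    have h74 : (7/4:ℝ) • S x y = 0 := by
      linear_combination (norm := module) (3/2:ℝ) • hC + (2:ℝ) • hB - hA1 - hA2'
    rcases smul_eq_zero.mp h74 with h | h
    · norm_num at h
    · exact h
  intro x y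
  have h := key ((2:ℝ)⁻¹•(x+y)) ((2:ℝ)⁻¹•(x-y))
  simp only [hS] at h
  rw [show (2:ℝ)⁻¹•(x+y) + (2:ℝ)⁻¹•(x-y) = x from by module,
    show (2:ℝ)⁻¹•(x+y) - (2:ℝ)⁻¹•(x-y) = y from by module] at h
  have e3 : A (x+y) = (2:ℝ)•A ((2:ℝ)⁻¹•(x+y)) := by
    have := h2 ((2:ℝ)⁻¹•(x+y))
    rw [show (2:ℝ)•((2:ℝ)⁻¹•(x+y)) = x+y from by module] at this
    exact this
  rw [e3]
  linear_combination (norm := module) -h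

lemma hyers [CompleteSpace Y] (p : ℝ) (g : X → Y) (hg0 : g 0 = 0) (c lam : ℝ)
    (hr : (2:ℝ)^p < lam) (hlam : 0 < lam)
    (hstep : ∀ x, ‖g ((2:ℝ)•x) - lam • g x‖ ≤ c * ‖x‖^p)
    (th : ℝ) (hDg : ∀ x y, ‖Dmap g x y‖ ≤ th * (‖x‖^p + ‖y‖^p)) :
    ∃ L : X → Y, (∀ x, ‖g x - L x‖ ≤ c / (lam - (2:ℝ)^p) * ‖x‖^p) ∧
      (∀ x, L ((2:ℝ)•x) = lam • L x) ∧ (∀ x y, Dmap L x y = 0) ∧ L 0 = 0 := by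
  have hrpos : (0:ℝ) < (2:ℝ)^p := Real.rpow_pos_of_pos two_pos p
  set r : ℝ := (2:ℝ)^p with hrdef
  have hq1 : r / lam < 1 := (div_lt_one hlam).mpr hr
  have hq0 : 0 ≤ r / lam := by positivity
  set u : X → ℕ → Y := fun x n => ((lam^n)⁻¹) • g (((2:ℝ)^n) • x) with hu
  have hdist : ∀ x n, dist (u x n) (u x (n+1)) ≤ (c/lam * ‖x‖^p) * (r/lam)^n := by
    intro x n
    rw [dist_eq_norm]
    have e : u x n - u x (n+1)
        = ((lam^(n+1))⁻¹) • (lam • g (((2:ℝ)^n)•x) - g ((2:ℝ) • (((2:ℝ)^n)•x))) := by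
      simp only [hu]
      rw [smul_sub, smul_smul, show (lam^(n+1))⁻¹ * lam = (lam^n)⁻¹ from by
        rw [pow_succ, mul_inv, inv_mul_cancel_right₀ hlam.ne'],
        show (2:ℝ) • (((2:ℝ)^n)•x) = ((2:ℝ)^(n+1))•x from by
          rw [smul_smul, ← pow_succ']]
    rw [e, norm_smul, norm_sub_rev]
    calc ‖(lam^(n+1))⁻¹‖ * ‖g ((2:ℝ) • (((2:ℝ)^n)•x)) - lam • g (((2:ℝ)^n)•x)‖
        ≤ (lam^(n+1))⁻¹ * (c * ‖((2:ℝ)^n)•x‖^p) := by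
          rw [Real.norm_eq_abs, abs_of_pos (by positivity)]
          exact mul_le_mul_of_nonneg_left (hstep _) (by positivity)
      _ = (c/lam * ‖x‖^p) * (r/lam)^n := by
          rw [norm_pow_smul, hrdef, div_pow]
          field_simp
          ring
  have hcau : ∀ x, CauchySeq (u x) := fun x =>
    cauchySeq_of_le_geometric _ _ hq1 (hdist x)
  choose L hL using fun x => cauchySeq_tendsto_of_complete (hcau x)
  refine ⟨L, ?_, ?_, ?_, ?_⟩
  · intro x
    have h0 := dist_le_of_le_geometric_of_tendsto₀ _ _ hq1 (hdist x) (hL x)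
    have e0 : u x 0 = g x := by simp [hu]
    rw [e0, dist_eq_norm] at h0
    calc ‖g x - L x‖ ≤ (c/lam * ‖x‖^p) / (1 - r/lam) := h0
      _ = c / (lam - r) * ‖x‖^p := by
          have : lam - r ≠ 0 := by linarith
          field_simp
  · intro x
    have t1 : Tendsto (fun n => lam • u x (n+1)) atTop (𝓝 (lam • L x)) :=
      (((hL x).comp (tendsto_add_atTop_nat 1)).const_smul lam)
    have e : ∀ n, u ((2:ℝ)•x) n = lam • u x (n+1) := by
      intro n
      simp only [hu]
      rw [smul_smul, smul_smul,
        show (2:ℝ)^n * 2 = (2:ℝ)^(n+1) from (pow_succ 2 n).symm,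
        show lam * (lam^(n+1))⁻¹ = (lam^n)⁻¹ from by
          rw [pow_succ, mul_comm (lam^n) lam, mul_inv, mul_inv_cancel_left₀ hlam.ne']]
    have := hL ((2:ℝ)•x)
    rw [show u ((2:ℝ)•x) = fun n => lam • u x (n+1) from funext e] at this
    exact tendsto_nhds_unique this t1
  · intro x y
    set v : ℕ → Y := fun n =>
      (7:ℝ) • (u ((2:ℝ)•x + y) n + u ((2:ℝ)•x - y) n)
        - (28:ℝ) • (u (x+y) n + u (x-y) n)
        + (3:ℝ) • (u ((2:ℝ)•y) n - (2:ℝ) • u y n)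
        - (14:ℝ) • (u ((2:ℝ)•x) n - (4:ℝ) • u x n) with hv
    have t1 : Tendsto v atTop (𝓝 (Dmap L x y)) := by
      simp only [Dmap]
      exact ((((hL _).add (hL _)).const_smul (7:ℝ)).sub
          (((hL _).add (hL _)).const_smul (28:ℝ))).add
          (((hL _).sub ((hL y).const_smul (2:ℝ))).const_smul (3:ℝ)) |>.sub
          (((hL _).sub ((hL x).const_smul (4:ℝ))).const_smul (14:ℝ))
    have t2 : Tendsto v atTop (𝓝 0) := by
      apply squeeze_zero_norm (a := fun n => (th * (‖x‖^p + ‖y‖^p)) * (r/lam)^n)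
      · intro n
        have e : v n = ((lam^n)⁻¹) • Dmap g (((2:ℝ)^n)•x) (((2:ℝ)^n)•y) := by
          simp only [hv, hu, Dmap]
          rw [show (2:ℝ) • (((2:ℝ)^n)•x) + ((2:ℝ)^n)•y = ((2:ℝ)^n) • ((2:ℝ)•x + y) from by module,
            show (2:ℝ) • (((2:ℝ)^n)•x) - ((2:ℝ)^n)•y = ((2:ℝ)^n) • ((2:ℝ)•x - y) from by module,
            show ((2:ℝ)^n)•x + ((2:ℝ)^n)•y = ((2:ℝ)^n) • (x + y) from by module,
            show ((2:ℝ)^n)•x - ((2:ℝ)^n)•y = ((2:ℝ)^n) • (x - y) from by module,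
            show (2:ℝ) • (((2:ℝ)^n)•y) = ((2:ℝ)^n) • ((2:ℝ)•y) from by module,
            show (2:ℝ) • (((2:ℝ)^n)•x) = ((2:ℝ)^n) • ((2:ℝ)•x) from by module]
          module
        rw [e, norm_smul, Real.norm_eq_abs, abs_of_pos (by positivity)]
        calc (lam^n)⁻¹ * ‖Dmap g (((2:ℝ)^n)•x) (((2:ℝ)^n)•y)‖
            ≤ (lam^n)⁻¹ * (th * (‖((2:ℝ)^n)•x‖^p + ‖((2:ℝ)^n)•y‖^p)) :=
              mul_le_mul_of_nonneg_left (hDg _ _) (by positivity)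
          _ = (th * (‖x‖^p + ‖y‖^p)) * (r/lam)^n := by
              rw [norm_pow_smul, norm_pow_smul, hrdef, div_pow]
              field_simp
      · have := (tendsto_pow_atTop_nhds_zero_of_lt_one hq0 hq1).const_mul
          (th * (‖x‖^p + ‖y‖^p))
        simpa using this
    exact tendsto_nhds_unique t1 t2
  · have e : ∀ n, u 0 n = 0 := by intro n; simp [hu, hg0]
    have := hL 0
    rw [show u (0:X) = fun _ => (0:Y) from funext e] at this
    exact tendsto_nhds_unique this tendsto_const_nhds

end Helpers
set_option maxHeartbeats 1000000 in
theorem rassias_stability {X Y : Type*} [NormedAddCommGroup X] [NormedSpace ℝ X]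
    [NormedAddCommGroup Y] [NormedSpace ℝ Y] [CompleteSpace Y]
    (θ p : ℝ) (hθ : 0 ≤ θ) (hp : p < 1)
    (f : X → Y) (hD : ∀ x y : X, ‖Dmap f x y‖ ≤ θ * (‖x‖ ^ p + ‖y‖ ^ p)) (hf0 : f 0 = 0) :
    ∃ (Q A : X → Y), IsQuartic Q ∧ (∀ x y : X, A (x + y) = A x + A y) ∧
      (∀ x : X, ‖f x - Q x - A x‖ ≤
        (θ / 48) * ‖x‖ ^ p * (16 / (16 - (2 : ℝ) ^ p) + 96 / (1 - (2 : ℝ) ^ (p - 1)))) ∧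
      ∀ Q' A' : X → Y, IsQuartic Q' → (∀ x y : X, A' (x + y) = A' x + A' y) →
        (∀ x : X, ‖f x - Q' x - A' x‖ ≤
          (θ / 48) * ‖x‖ ^ p * (16 / (16 - (2 : ℝ) ^ p) + 96 / (1 - (2 : ℝ) ^ (p - 1)))) →
        Q' = Q ∧ A' = A := by
  have hrpos : (0:ℝ) < (2:ℝ)^p := Real.rpow_pos_of_pos two_pos p
  have hr2 : (2:ℝ)^p < 2 := by
    calc (2:ℝ)^p < (2:ℝ)^(1:ℝ) := Real.rpow_lt_rpow_of_exponent_lt one_lt_two hp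
      _ = 2 := Real.rpow_one 2
  have hr16 : (2:ℝ)^p < 16 := by linarith
  -- even and odd parts
  set fe : X → Y := fun z => (2⁻¹:ℝ) • (f z + f (-z)) with hfe
  set fo : X → Y := fun z => (2⁻¹:ℝ) • (f z - f (-z)) with hfo
  have hfe0 : fe 0 = 0 := by simp [hfe, hf0]
  have hfo0 : fo 0 = 0 := by simp [hfo, hf0]
  have hfe_even : ∀ z : X, fe (-z) = fe z := by
    intro z; simp only [hfe]; rw [neg_neg]; module
  have hfo_odd : ∀ z : X, fo (-z) = - fo z := by
    intro z; simp only [hfo]; rw [neg_neg]; module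
  have hfeD : ∀ x y : X, ‖Dmap fe x y‖ ≤ θ * (‖x‖^p + ‖y‖^p) := by
    intro x y
    have e : Dmap fe x y = (2⁻¹:ℝ) • (Dmap f x y + Dmap f (-x) (-y)) := by
      simp only [Dmap, hfe]
      rw [show -((2:ℝ)•x + y) = (2:ℝ)•(-x) + (-y) from by module,
        show -((2:ℝ)•x - y) = (2:ℝ)•(-x) - (-y) from by module,
        show -(x+y) = -x + -y from by module,
        show -(x-y) = -x - -y from by module,
        show -((2:ℝ)•y) = (2:ℝ)•(-y) from by module,
        show -((2:ℝ)•x) = (2:ℝ)•(-x) from by module]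
      module
    calc ‖Dmap fe x y‖ = 2⁻¹ * ‖Dmap f x y + Dmap f (-x) (-y)‖ := by
          rw [e, norm_smul]; norm_num
      _ ≤ 2⁻¹ * (‖Dmap f x y‖ + ‖Dmap f (-x) (-y)‖) := by
          have := norm_add_le (Dmap f x y) (Dmap f (-x) (-y))
          linarith
      _ ≤ 2⁻¹ * (θ * (‖x‖^p + ‖y‖^p) + θ * (‖-x‖^p + ‖-y‖^p)) := by
          have h1 := hD x y
          have h2 := hD (-x) (-y)
          linarith
      _ = θ * (‖x‖^p + ‖y‖^p) := by rw [norm_neg, norm_neg]; ring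
  have hfoD : ∀ x y : X, ‖Dmap fo x y‖ ≤ θ * (‖x‖^p + ‖y‖^p) := by
    intro x y
    have e : Dmap fo x y = (2⁻¹:ℝ) • (Dmap f x y - Dmap f (-x) (-y)) := by
      simp only [Dmap, hfo]
      rw [show -((2:ℝ)•x + y) = (2:ℝ)•(-x) + (-y) from by module,
        show -((2:ℝ)•x - y) = (2:ℝ)•(-x) - (-y) from by module,
        show -(x+y) = -x + -y from by module,
        show -(x-y) = -x - -y from by module,
        show -((2:ℝ)•y) = (2:ℝ)•(-y) from by module,
        show -((2:ℝ)•x) = (2:ℝ)•(-x) from by module]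
      module
    calc ‖Dmap fo x y‖ = 2⁻¹ * ‖Dmap f x y - Dmap f (-x) (-y)‖ := by
          rw [e, norm_smul]; norm_num
      _ ≤ 2⁻¹ * (‖Dmap f x y‖ + ‖Dmap f (-x) (-y)‖) := by
          have := norm_sub_le (Dmap f x y) (Dmap f (-x) (-y))
          linarith
      _ ≤ 2⁻¹ * (θ * (‖x‖^p + ‖y‖^p) + θ * (‖-x‖^p + ‖-y‖^p)) := by
          have h1 := hD x y
          have h2 := hD (-x) (-y)
          linarith
      _ = θ * (‖x‖^p + ‖y‖^p) := by rw [norm_neg, norm_neg]; ring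
  have key_e : ∀ z : X, ‖fe ((2:ℝ)•z) - (16:ℝ)•fe z‖ ≤ 2*θ/3 * ‖z‖^p := by
    intro z
    have h := hfeD 0 z
    have e : Dmap fe 0 z = (3:ℝ) • (fe ((2:ℝ)•z) - (16:ℝ)•fe z) := by
      simp only [Dmap]
      rw [show (2:ℝ)•(0:X) + z = z from by module,
        show (2:ℝ)•(0:X) - z = -z from by module,
        show (0:X) + z = z from by module,
        show (0:X) - z = -z from by module,
        show (2:ℝ)•(0:X) = (0:X) from by module, hfe_even z, hfe0]
      module
    rw [e, norm_smul, Real.norm_eq_abs, norm_zero] at h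
    have h0 : (0:ℝ)^p ≤ ‖z‖^p := rpow_zero_le p _ (norm_nonneg z)
    rw [show |(3:ℝ)| = 3 from by norm_num] at h
    have h1 : θ * (0:ℝ)^p ≤ θ * ‖z‖^p := mul_le_mul_of_nonneg_left h0 hθ
    nlinarith
  have key_o : ∀ z : X, ‖fo ((2:ℝ)•z) - (2:ℝ)•fo z‖ ≤ 2*θ/3 * ‖z‖^p := by
    intro z
    have h := hfoD 0 z
    have e : Dmap fo 0 z = (3:ℝ) • (fo ((2:ℝ)•z) - (2:ℝ)•fo z) := by
      simp only [Dmap]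
      rw [show (2:ℝ)•(0:X) + z = z from by module,
        show (2:ℝ)•(0:X) - z = -z from by module,
        show (0:X) + z = z from by module,
        show (0:X) - z = -z from by module,
        show (2:ℝ)•(0:X) = (0:X) from by module, hfo_odd z, hfo0]
      module
    rw [e, norm_smul, Real.norm_eq_abs, norm_zero] at h
    have h0 : (0:ℝ)^p ≤ ‖z‖^p := rpow_zero_le p _ (norm_nonneg z)
    rw [show |(3:ℝ)| = 3 from by norm_num] at h
    have h1 : θ * (0:ℝ)^p ≤ θ * ‖z‖^p := mul_le_mul_of_nonneg_left h0 hθ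
    nlinarith
  obtain ⟨Q, hQb, hQ2, hQD, hQ0⟩ :=
    hyers p fe hfe0 (2*θ/3) 16 hr16 (by norm_num) key_e θ hfeD
  obtain ⟨A, hAb, hA2, hAD, hA0⟩ :=
    hyers p fo hfo0 (2*θ/3) 2 hr2 (by norm_num) key_o θ hfoD
  have hQuartic : IsQuartic Q := quartic_of Q hQ2 hQD
  have hAadd : ∀ x y : X, A (x+y) = A x + A y := by
    apply additive_of A hA2
    intro x y
    have h := hAD x y
    simp only [Dmap] at h
    rw [hA2 x, hA2 y] at h
    linear_combination (norm := module) (7⁻¹:ℝ) • h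
  have hrr : (2:ℝ)^(p-1) = (2:ℝ)^p / 2 := by
    rw [Real.rpow_sub two_pos, Real.rpow_one]
  have hbound : ∀ x : X, ‖f x - Q x - A x‖ ≤
      (θ/48) * ‖x‖^p * (16/(16-(2:ℝ)^p) + 96/(1-(2:ℝ)^(p-1))) := by
    intro x
    have hsplit : f x - Q x - A x = (fe x - Q x) + (fo x - A x) := by
      simp only [hfe, hfo]; module
    have h1 := hQb x
    have h2 := hAb x
    rw [hsplit, hrr]
    have hd2 : (0:ℝ) < 2 - (2:ℝ)^p := by linarith
    have hd16 : (0:ℝ) < 16 - (2:ℝ)^p := by linarith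
    have hd3 : (0:ℝ) < 1 - (2:ℝ)^p/2 := by linarith
    have hcon : (2*θ/3)/(16-(2:ℝ)^p) + (2*θ/3)/(2-(2:ℝ)^p)
        ≤ (θ/48)*(16/(16-(2:ℝ)^p) + 96/(1-(2:ℝ)^p/2)) := by
      have hid : (θ/48)*(16/(16-(2:ℝ)^p) + 96/(1-(2:ℝ)^p/2))
          - ((2*θ/3)/(16-(2:ℝ)^p) + (2*θ/3)/(2-(2:ℝ)^p))
          = θ*(158-9*(2:ℝ)^p)/(3*((16-(2:ℝ)^p)*(2-(2:ℝ)^p))) := by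
        field_simp
        ring
      have hnum : (0:ℝ) ≤ θ*(158-9*(2:ℝ)^p) := by nlinarith
      have hden : (0:ℝ) ≤ 3*((16-(2:ℝ)^p)*(2-(2:ℝ)^p)) := by nlinarith
      have := div_nonneg hnum hden
      linarith
    calc ‖(fe x - Q x) + (fo x - A x)‖
        ≤ ‖fe x - Q x‖ + ‖fo x - A x‖ := norm_add_le _ _
      _ ≤ (2*θ/3)/(16-(2:ℝ)^p)*‖x‖^p + (2*θ/3)/(2-(2:ℝ)^p)*‖x‖^p := add_le_add h1 h2
      _ = ((2*θ/3)/(16-(2:ℝ)^p) + (2*θ/3)/(2-(2:ℝ)^p))*‖x‖^p := by ring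
      _ ≤ ((θ/48)*(16/(16-(2:ℝ)^p) + 96/(1-(2:ℝ)^p/2)))*‖x‖^p :=
          mul_le_mul_of_nonneg_right hcon (Real.rpow_nonneg (norm_nonneg x) p)
      _ = (θ/48)*‖x‖^p*(16/(16-(2:ℝ)^p) + 96/(1-(2:ℝ)^p/2)) := by ring
  refine ⟨Q, A, hQuartic, hAadd, hbound, ?_⟩
  intro Q' A' hQ' hA' hb'
  have hQ'0 : Q' 0 = 0 := by
    have h := hQ' 0 0
    rw [show (2:ℝ)•(0:X) + 0 = (0:X) from by module,
      show (2:ℝ)•(0:X) - 0 = (0:X) from by module,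
      show (0:X) + 0 = (0:X) from by module,
      show (0:X) - 0 = (0:X) from by module] at h
    have h24 : (24:ℝ) • Q' 0 = 0 := by
      linear_combination (norm := module) -h
    rcases smul_eq_zero.mp h24 with h' | h'
    · norm_num at h'
    · exact h'
  have hQ'2 : ∀ x : X, Q' ((2:ℝ)•x) = (16:ℝ) • Q' x := by
    intro x
    have h := hQ' x 0
    simp only [add_zero, sub_zero] at h
    rw [hQ'0] at h
    have h2 : (2:ℝ) • (Q' ((2:ℝ)•x) - (16:ℝ)•Q' x) = 0 := by
      linear_combination (norm := module) h
    rcases smul_eq_zero.mp h2 with h' | h'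
    · norm_num at h'
    · exact sub_eq_zero.mp h'
  have hA'2 : ∀ x : X, A' ((2:ℝ)•x) = (2:ℝ) • A' x := by
    intro x
    rw [two_smul, two_smul]
    exact hA' x x
  have hQn := iter_smul Q 16 hQ2
  have hQ'n := iter_smul Q' 16 hQ'2
  have hAn := iter_smul A 2 hA2
  have hA'n := iter_smul A' 2 hA'2
  set B : ℝ := 16/(16-(2:ℝ)^p) + 96/(1-(2:ℝ)^(p-1)) with hB
  have hdiff : ∀ z : X, ‖(Q z - Q' z) + (A z - A' z)‖ ≤ 2*((θ/48)*‖z‖^p*B) := by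
    intro z
    have h1 := hbound z
    have h2 := hb' z
    calc ‖(Q z - Q' z) + (A z - A' z)‖
        = ‖(f z - Q' z - A' z) - (f z - Q z - A z)‖ := by
          rw [show (f z - Q' z - A' z) - (f z - Q z - A z)
            = (Q z - Q' z) + (A z - A' z) from by module]
      _ ≤ ‖f z - Q' z - A' z‖ + ‖f z - Q z - A z‖ := norm_sub_le _ _
      _ ≤ 2*((θ/48)*‖z‖^p*B) := by linarith
  have hQQ' : ∀ x : X, Q' x = Q x := by
    intro x
    have hn : ∀ n : ℕ, ‖((16:ℝ)^n)•(Q x - Q' x) + ((2:ℝ)^n)•(A x - A' x)‖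
        ≤ 2*((θ/48)*(((2:ℝ)^p)^n * ‖x‖^p)*B) := by
      intro n
      have h := hdiff (((2:ℝ)^n)•x)
      rw [hQn n x, hQ'n n x, hAn n x, hA'n n x, ← smul_sub, ← smul_sub,
        norm_pow_smul] at h
      exact h
    have hle : ∀ n : ℕ, ‖Q x - Q' x‖
        ≤ 2*((θ/48)*‖x‖^p*B)*(((2:ℝ)^p/16)^n) + ((8:ℝ)⁻¹)^n * ‖A x - A' x‖ := by
      intro n
      have e : Q x - Q' x + ((8:ℝ)⁻¹)^n • (A x - A' x)
          = (((16:ℝ)^n)⁻¹) • (((16:ℝ)^n)•(Q x - Q' x) + ((2:ℝ)^n)•(A x - A' x)) := by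
        rw [smul_add, smul_smul, smul_smul,
          show ((16:ℝ)^n)⁻¹ * (16:ℝ)^n = 1 from by
            rw [inv_mul_cancel₀ (by positivity : ((16:ℝ)^n) ≠ 0)],
          show ((16:ℝ)^n)⁻¹ * (2:ℝ)^n = ((8:ℝ)⁻¹)^n from by
            rw [← inv_pow, ← mul_pow]; norm_num,
          one_smul]
      have h1 : ‖Q x - Q' x + ((8:ℝ)⁻¹)^n • (A x - A' x)‖
          ≤ 2*((θ/48)*‖x‖^p*B)*(((2:ℝ)^p/16)^n) := by
        rw [e, norm_smul, Real.norm_eq_abs, abs_of_pos (by positivity)]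
        calc ((16:ℝ)^n)⁻¹ * ‖((16:ℝ)^n)•(Q x - Q' x) + ((2:ℝ)^n)•(A x - A' x)‖
            ≤ ((16:ℝ)^n)⁻¹ * (2*((θ/48)*(((2:ℝ)^p)^n*‖x‖^p)*B)) :=
              mul_le_mul_of_nonneg_left (hn n) (by positivity)
          _ = 2*((θ/48)*‖x‖^p*B)*(((2:ℝ)^p/16)^n) := by
              rw [div_pow]
              field_simp
      calc ‖Q x - Q' x‖
          ≤ ‖Q x - Q' x + ((8:ℝ)⁻¹)^n • (A x - A' x)‖ + ‖((8:ℝ)⁻¹)^n • (A x - A' x)‖ := by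
            have h3 := norm_add_le (Q x - Q' x + ((8:ℝ)⁻¹)^n • (A x - A' x))
              (-(((8:ℝ)⁻¹)^n • (A x - A' x)))
            simpa using h3
        _ ≤ 2*((θ/48)*‖x‖^p*B)*(((2:ℝ)^p/16)^n) + ((8:ℝ)⁻¹)^n * ‖A x - A' x‖ := by
            rw [norm_smul, Real.norm_eq_abs, abs_of_pos (by positivity)]
            exact add_le_add h1 (le_refl _)
    have htend : Tendsto (fun n : ℕ =>
        2*((θ/48)*‖x‖^p*B)*(((2:ℝ)^p/16)^n) + ((8:ℝ)⁻¹)^n * ‖A x - A' x‖) atTop (𝓝 0) := by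
      have l1 := (tendsto_pow_atTop_nhds_zero_of_lt_one
        (by positivity : (0:ℝ) ≤ (2:ℝ)^p/16)
        (by rw [div_lt_one (by norm_num : (0:ℝ) < 16)]; exact hr16)).const_mul
        (2*((θ/48)*‖x‖^p*B))
      have l2 := (tendsto_pow_atTop_nhds_zero_of_lt_one
        (by norm_num : (0:ℝ) ≤ (8:ℝ)⁻¹) (by norm_num : (8:ℝ)⁻¹ < 1)).mul_const
        ‖A x - A' x‖
      have := l1.add l2
      simpa using this
    have h0 : ‖Q x - Q' x‖ ≤ 0 := ge_of_tendsto' htend hle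
    exact (sub_eq_zero.mp (norm_le_zero_iff.mp h0)).symm
  have hAA' : ∀ x : X, A' x = A x := by
    intro x
    have hn : ∀ n : ℕ, ((2:ℝ)^n) * ‖A x - A' x‖ ≤ 2*((θ/48)*(((2:ℝ)^p)^n*‖x‖^p)*B) := by
      intro n
      have h := hdiff (((2:ℝ)^n)•x)
      rw [hQn n x, hQ'n n x, hAn n x, hA'n n x, ← smul_sub, ← smul_sub,
        norm_pow_smul, hQQ' x, sub_self, smul_zero, zero_add, norm_smul,
        Real.norm_eq_abs, abs_of_pos (by positivity : (0:ℝ) < (2:ℝ)^n)] at h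
      exact h
    have hle : ∀ n : ℕ, ‖A x - A' x‖ ≤ 2*((θ/48)*‖x‖^p*B)*(((2:ℝ)^p/2)^n) := by
      intro n
      have h2n : ((2:ℝ)^n) ≠ 0 := by positivity
      calc ‖A x - A' x‖ = ((2:ℝ)^n)⁻¹ * (((2:ℝ)^n)*‖A x - A' x‖) :=
            (inv_mul_cancel_left₀ h2n _).symm
        _ ≤ ((2:ℝ)^n)⁻¹ * (2*((θ/48)*(((2:ℝ)^p)^n*‖x‖^p)*B)) :=
            mul_le_mul_of_nonneg_left (hn n) (by positivity)
        _ = 2*((θ/48)*‖x‖^p*B)*(((2:ℝ)^p/2)^n) := by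
            rw [div_pow]
            field_simp
    have htend : Tendsto (fun n : ℕ =>
        2*((θ/48)*‖x‖^p*B)*(((2:ℝ)^p/2)^n)) atTop (𝓝 0) := by
      have l1 := (tendsto_pow_atTop_nhds_zero_of_lt_one
        (by positivity : (0:ℝ) ≤ (2:ℝ)^p/2)
        (by rw [div_lt_one (by norm_num : (0:ℝ) < 2)]; exact hr2)).const_mul
        (2*((θ/48)*‖x‖^p*B))
      simpa using l1
    have h0 : ‖A x - A' x‖ ≤ 0 := ge_of_tendsto' htend hle
    exact (sub_eq_zero.mp (norm_le_zero_iff.mp h0)).symm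
  exact ⟨funext hQQ', funext hAA'⟩
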